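/- arXiv:1610.01696 — 4 statements merged into one kernel-verified Lean document; each statement's English description precedes it below -/
import Mathlib

section
/- (Dyson identity.) Let 𝔅 be a unital Banach algebra, let A, B : ℝ → 𝔅 be continuous, and let Y : ℝ → 𝔅 and Z : ℝ × ℝ → 𝔅 be continuously differentiable maps satisfying Y(t₀) = 1, Y'(t) = Y(t)·A(t) for all t, and Z(t,t) = 1 with ∂Z/∂s (t,s) = −B(s)·Z(t,s) for all s, t. Then for all t ≥ t₀, Y(t) − Z(t,t₀) = ∫_{t₀}^{t} Y(s)·(A(s) − B(s))·Z(t,s) ds. -/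
open intervalIntegral

/-- **The Dyson identity.**  Let `𝔅` be a unital (real) Banach algebra, `A B : ℝ → 𝔅`
continuous, `Y` a C¹ solution of `Y(t₀) = 1`, `Y'(t) = Y(t)·A(t)`, and `Z(t,s)` a C¹ solution of
`Z(t,t) = 1`, `∂Z/∂s(t,s) = −B(s)·Z(t,s)`.  Then for all `t ≥ t₀`,
`Y(t) − Z(t,t₀) = ∫_{t₀}^{t} Y(s)·(A(s) − B(s))·Z(t,s) ds`. -/
theorem dyson_identity {𝔅 : Type*} [NormedRing 𝔅] [NormedAlgebra ℝ 𝔅] [CompleteSpace 𝔅]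
    (A B : ℝ → 𝔅) (hA : Continuous A) (hB : Continuous B)
    (Y : ℝ → 𝔅) (Z : ℝ → ℝ → 𝔅) (t₀ : ℝ)
    (hY₀ : Y t₀ = 1)
    (hY : ∀ t : ℝ, HasDerivAt Y (Y t * A t) t)
    (hZ_diag : ∀ t : ℝ, Z t t = 1)
    (hZ : ∀ t s : ℝ, HasDerivAt (fun u => Z t u) (-(B s * Z t s)) s)
    (hZ_cont : Continuous fun p : ℝ × ℝ => Z p.1 p.2) :
    ∀ t : ℝ, t₀ ≤ t →
      Y t - Z t t₀ = ∫ s in t₀..t, Y s * (A s - B s) * Z t s := by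
  intro t ht
  have hYc : Continuous Y := by
    apply continuous_iff_continuousAt.2
    exact fun s => (hY s).continuousAt
  have hZtc : Continuous fun s => Z t s :=
    hZ_cont.comp (continuous_const.prodMk continuous_id)
  have hF : ∀ s : ℝ, HasDerivAt (fun u => Y u * Z t u)
      (Y s * (A s - B s) * Z t s) s := by
    intro s
    have := (hY s).mul (hZ t s)
    convert this using 1
    · rfl
    simp [mul_sub, sub_mul, mul_assoc]
    abel
  have hint : IntervalIntegrable (fun s => Y s * (A s - B s) * Z t s)
      MeasureTheory.volume t₀ t :=
    ((hYc.mul (hA.sub hB)).mul hZtc).intervalIntegrable t₀ t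
  have := intervalIntegral.integral_eq_sub_of_hasDerivAt
    (fun s _ => hF s) hint
  rw [this, hZ_diag, hY₀, mul_one, one_mul]
end

section
/- (Nakajima–Mori–Zwanzig operator identity.) Let 𝔅 be a unital Banach algebra, L : ℝ → 𝔅 continuous, 𝒫 ∈ 𝔅 an idempotent (𝒫² = 𝒫), and set 𝒬 = 1 − 𝒫. Let E : ℝ → 𝔅 satisfy E(t₀) = 1 and E'(t) = E(t)·L(t) for all t, and let G : ℝ × ℝ → 𝔅 be continuously differentiable with G(t,t) = 1, ∂G/∂t (t,s) = G(t,s)·𝒬·L(t), and ∂G/∂s (t,s) = −𝒬·L(s)·G(t,s) for all s ≤ t. Then for all t ≥ t₀, d/dt [E(t)·𝒫] = E(t)·𝒫·L(t)·𝒫 + G(t,t₀)·𝒬·L(t)·𝒫 + ∫_{t₀}^{t} E(s)·𝒫·L(s)·G(t,s)·𝒬·L(t)·𝒫 ds. -/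
open intervalIntegral

/-- **The Nakajima–Mori–Zwanzig operator identity.**  Let `𝔅` be a unital (real) Banach algebra,
`L : ℝ → 𝔅` continuous, `P ∈ 𝔅` idempotent with complement `Q = 1 − P`.  Let `E` solve
`E(t₀) = 1`, `E'(t) = E(t)·L(t)`, and let the orthogonal-dynamics propagator `G` satisfy
`G(t,t) = 1`, `∂G/∂t(t,s) = G(t,s)·Q·L(t)` and `∂G/∂s(t,s) = −Q·L(s)·G(t,s)` for `s ≤ t`.  Then
for all `t ≥ t₀`,
`d/dt[E(t)·P] = E(t)·P·L(t)·P + G(t,t₀)·Q·L(t)·P + ∫_{t₀}^{t} E(s)·P·L(s)·G(t,s)·Q·L(t)·P ds`. -/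
theorem nmz_operator_identity {𝔅 : Type*} [NormedRing 𝔅] [NormedAlgebra ℝ 𝔅] [CompleteSpace 𝔅]
    (L : ℝ → 𝔅) (hL : Continuous L)
    (P : 𝔅) (hP : P * P = P) (Q : 𝔅) (hQ : Q = 1 - P)
    (E : ℝ → 𝔅) (t₀ : ℝ)
    (hE₀ : E t₀ = 1)
    (hE : ∀ t : ℝ, HasDerivAt E (E t * L t) t)
    (G : ℝ → ℝ → 𝔅)
    (hG_diag : ∀ t : ℝ, G t t = 1)
    (hG_t : ∀ s t : ℝ, s ≤ t → HasDerivAt (fun u => G u s) (G t s * (Q * L t)) t)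
    (hG_s : ∀ s t : ℝ, s ≤ t → HasDerivAt (fun u => G t u) (-(Q * L s * G t s)) s)
    (hG_cont : Continuous fun p : ℝ × ℝ => G p.1 p.2) :
    ∀ t : ℝ, t₀ ≤ t →
      HasDerivAt (fun u => E u * P)
        (E t * P * L t * P + G t t₀ * Q * L t * P +
          ∫ s in t₀..t, E s * P * L s * G t s * Q * L t * P) t := by
  intro t ht
  have hEcont : Continuous E := by
    rw [continuous_iff_continuousAt]; exact fun x => (hE x).continuousAt
  have hGt : Continuous fun s : ℝ => G t s :=
    hG_cont.comp (continuous_const.prodMk continuous_id)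
  have hIntCont : Continuous fun s : ℝ => E s * P * L s * G t s := by
    continuity
  -- Dyson identity: E t = G t t₀ + ∫ E s P L s G t s
  have hderiv : ∀ s ∈ Set.uIcc t₀ t,
      HasDerivAt (fun u => E u * G t u) (E s * P * L s * G t s) s := by
    intro s hs
    rw [Set.uIcc_of_le ht] at hs
    have h := (hE s).mul (hG_s s t hs.2)
    convert h using 1
    · rfl
    subst hQ
    noncomm_ring
  have hFTC := intervalIntegral.integral_eq_sub_of_hasDerivAt hderiv
    (hIntCont.continuousOn.intervalIntegrable)
  rw [hG_diag, hE₀, mul_one, one_mul] at hFTC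
  have key : E t = G t t₀ + ∫ s in t₀..t, E s * P * L s * G t s := by
    rw [hFTC]; abel
  -- pull the constant out of the goal's integral
  have hpull : (∫ s in t₀..t, E s * P * L s * G t s * Q * L t * P)
      = (∫ s in t₀..t, E s * P * L s * G t s) * (Q * L t * P) := by
    have hInt : IntervalIntegrable (fun s => E s * P * L s * G t s)
        MeasureTheory.volume t₀ t := hIntCont.continuousOn.intervalIntegrable
    have := ((ContinuousLinearMap.mul ℝ 𝔅).flip (Q * L t * P)).intervalIntegral_comp_comm hInt
    simpa [ContinuousLinearMap.flip_apply, ContinuousLinearMap.mul_apply', mul_assoc] using this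
  have hmain := (hE t).mul_const P
  convert hmain using 1
  rw [hpull]
  have hint : (∫ s in t₀..t, E s * P * L s * G t s) = E t - G t t₀ := by
    rw [key]; abel
  rw [hint]
  subst hQ
  noncomm_ring
end

section
/- Let λ be a nonzero real number and define b : ℝ → ℝ by b(t) = (1 + 2·cos(2λt))/3. Then b(0) = 1 and for every t ≥ 0, b'(t) = −(8/3)·λ² ∫₀ᵗ cos(2λ(t−s)/√3)·b(s) ds. -/
/-- **The Volterra integro-differential equation for the projected state on SU(2).**  For a
nonzero real `λ`, the function `b(t) = (1 + 2·cos(2λt))/3` satisfies `b(0) = 1` and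
`b'(t) = −(8/3)·λ² ∫₀ᵗ cos(2λ(t−s)/√3)·b(s) ds` for every `t ≥ 0`. -/
theorem volterra_solution_su2_state
    (lam : ℝ) (h_lam : lam ≠ 0) (b : ℝ → ℝ)
    (hb : ∀ t : ℝ, b t = (1 + 2 * Real.cos (2 * lam * t)) / 3) :
    b 0 = 1 ∧
    ∀ t : ℝ, 0 ≤ t →
      HasDerivAt b (-(8 / 3) * lam ^ 2 *
        ∫ s in (0:ℝ)..t, Real.cos (2 * lam * (t - s) / Real.sqrt 3) * b s) t := by
  have h3 : (0:ℝ) < 3 := by norm_num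
  have hs3pos : (0:ℝ) < Real.sqrt 3 := Real.sqrt_pos.mpr h3
  have hs3 : Real.sqrt 3 ≠ 0 := ne_of_gt hs3pos
  have hs3sq : Real.sqrt 3 * Real.sqrt 3 = 3 := Real.mul_self_sqrt (by norm_num)
  have hs3ne1 : Real.sqrt 3 ≠ 1 := by
    intro h
    rw [h] at hs3sq
    norm_num at hs3sq
  constructor
  · rw [hb]; norm_num
  intro t ht
  set μ : ℝ := 2 * lam / Real.sqrt 3 with hμ
  have hμs : μ * Real.sqrt 3 = 2 * lam := by
    rw [hμ]; field_simp
  have hμ0 : μ ≠ 0 := by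
    rw [hμ]; exact div_ne_zero (by simpa using h_lam) hs3
  have hrel : 3 * μ ^ 2 = 4 * lam ^ 2 := by
    calc 3 * μ ^ 2 = Real.sqrt 3 * Real.sqrt 3 * μ ^ 2 := by rw [hs3sq]
      _ = (μ * Real.sqrt 3) ^ 2 := by ring
      _ = (2 * lam) ^ 2 := by rw [hμs]
      _ = 4 * lam ^ 2 := by ring
  have h1 : 2 * lam - μ ≠ 0 := by
    intro h
    have : μ = 2 * lam := by linarith
    rw [this] at hμs
    have : 2 * lam * (Real.sqrt 3 - 1) = 0 := by ring_nf; linarith [hμs]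
    rcases mul_eq_zero.mp this with h' | h'
    · exact h_lam (by linarith)
    · exact hs3ne1 (by linarith)
  have h2 : 2 * lam + μ ≠ 0 := by
    intro h
    have : μ = -(2 * lam) := by linarith
    rw [this] at hμs
    have : 2 * lam * (Real.sqrt 3 + 1) = 0 := by ring_nf; linarith [hμs]
    rcases mul_eq_zero.mp this with h' | h'
    · exact h_lam (by linarith)
    · linarith [hs3pos]
  set F : ℝ → ℝ := fun s => (1/3) * (-Real.sin (μ*(t-s))/μ
      + Real.sin (μ*t + (2*lam-μ)*s)/(2*lam-μ)
      - Real.sin (μ*t - (2*lam+μ)*s)/(2*lam+μ)) with hF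
  have hFd : ∀ s : ℝ, HasDerivAt F (Real.cos (2 * lam * (t - s) / Real.sqrt 3) * b s) s := by
    intro s
    have d1 : HasDerivAt (fun s : ℝ => μ * (t - s)) (-μ) s := by
      simpa using ((hasDerivAt_id s).const_sub t).const_mul μ
    have d1' : HasDerivAt (fun s : ℝ => Real.sin (μ * (t - s))) (Real.cos (μ*(t-s)) * (-μ)) s :=
      (Real.hasDerivAt_sin _).comp s d1
    have d2 : HasDerivAt (fun s : ℝ => μ * t + (2*lam-μ) * s) (2*lam-μ) s := by
      simpa using ((hasDerivAt_id s).const_mul (2*lam-μ)).const_add (μ * t)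
    have d2' : HasDerivAt (fun s : ℝ => Real.sin (μ*t + (2*lam-μ)*s))
        (Real.cos (μ*t + (2*lam-μ)*s) * (2*lam-μ)) s :=
      (Real.hasDerivAt_sin _).comp s d2
    have d3 : HasDerivAt (fun s : ℝ => μ * t - (2*lam+μ) * s) (-(2*lam+μ)) s := by
      simpa using (((hasDerivAt_id s).const_mul (2*lam+μ)).const_sub (μ * t))
    have d3' : HasDerivAt (fun s : ℝ => Real.sin (μ*t - (2*lam+μ)*s))
        (Real.cos (μ*t - (2*lam+μ)*s) * (-(2*lam+μ))) s :=
      (Real.hasDerivAt_sin _).comp s d3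
    have dF : HasDerivAt F ((1/3) * ((Real.cos (μ*(t-s)) * (-μ)) * μ⁻¹ * (-1)
        + Real.cos (μ*t + (2*lam-μ)*s) * (2*lam-μ) * (2*lam-μ)⁻¹
        - Real.cos (μ*t - (2*lam+μ)*s) * (-(2*lam+μ)) * (2*lam+μ)⁻¹)) s := by
      have := (((d1'.neg.div_const μ).add (d2'.div_const (2*lam-μ))).sub
        (d3'.div_const (2*lam+μ))).const_mul (1/3)
      convert this using 1
      · rfl
      · rfl
      · rfl
      · ring
    convert dF using 1
    rw [hb]
    have harg : 2 * lam * (t - s) / Real.sqrt 3 = μ * (t - s) := by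
      rw [hμ]; ring
    have e2 : μ*t + (2*lam-μ)*s = μ*(t-s) + 2*lam*s := by ring
    have e3 : μ*t - (2*lam+μ)*s = μ*(t-s) - 2*lam*s := by ring
    rw [harg, e2, e3, Real.cos_add, Real.cos_sub]
    field_simp
    ring
  have hcont : Continuous fun s => Real.cos (2 * lam * (t - s) / Real.sqrt 3) * b s := by
    have hbc : Continuous b := by
      have : b = fun t => (1 + 2 * Real.cos (2 * lam * t)) / 3 := funext hb
      rw [this]; fun_prop
    fun_prop
  have hint : (∫ s in (0:ℝ)..t, Real.cos (2 * lam * (t - s) / Real.sqrt 3) * b s)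
      = F t - F 0 :=
    intervalIntegral.integral_eq_sub_of_hasDerivAt (fun s _ => hFd s)
      (hcont.intervalIntegrable 0 t)
  rw [hint]
  have hbd : HasDerivAt b (-(4/3) * lam * Real.sin (2 * lam * t)) t := by
    have hd : HasDerivAt (fun u : ℝ => 2 * lam * u) (2 * lam) t := by
      simpa using (hasDerivAt_id t).const_mul (2 * lam)
    have : HasDerivAt (fun u : ℝ => (1 + 2 * Real.cos (2 * lam * u)) / 3)
        ((0 + 2 * (-Real.sin (2 * lam * t) * (2 * lam))) / 3) t := by
      exact (((hasDerivAt_const t (1:ℝ)).add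
        (((Real.hasDerivAt_cos _).comp t hd).const_mul 2)).div_const 3)
    have heq : b = fun u : ℝ => (1 + 2 * Real.cos (2 * lam * u)) / 3 := funext hb
    rw [heq]
    convert this using 1
    ring
  convert hbd using 1
  rw [hF]
  simp only
  have e1 : μ * (t - t) = 0 := by ring
  have e2 : μ*t + (2*lam-μ)*t = 2*lam*t := by ring
  have e3 : μ*t - (2*lam+μ)*t = -(2*lam*t) := by ring
  have e4 : μ*t + (2*lam-μ)*0 = μ*t := by ring
  have e5 : μ*t - (2*lam+μ)*0 = μ*t := by ring
  have e6 : μ*(t-0) = μ*t := by ring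
  rw [e1, e2, e3, e4, e5, e6, Real.sin_zero, Real.sin_neg]
  set S := Real.sin (2*lam*t)
  set M := Real.sin (μ*t)
  clear_value M S F μ
  have h1' : lam * 2 - μ ≠ 0 := by contrapose! h1; linarith
  have h2' : lam * 2 + μ ≠ 0 := by contrapose! h2; linarith
  field_simp
  linear_combination (-4*μ*S + 8*lam*M) * hrel
end

section
/- (Rodrigues formula.) Let x, y, z ∈ ℝ, not all zero, set r = √(x² + y² + z²), and let X be the real 3×3 skew-symmetric matrix with rows (0, −z, y), (z, 0, −x), (−y, x, 0). Then for every t ∈ ℝ, the matrix exponential satisfies exp(tX) = I + (sin(rt)/r)·X + ((1 − cos(rt))/r²)·X². -/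
set_option maxHeartbeats 1000000


open Matrix

/-- **The Rodrigues formula.**  Let `(x,y,z) ∈ ℝ³` be nonzero, `r = √(x² + y² + z²)`, and let
`X` be the associated `3×3` skew-symmetric matrix.  Then for every `t ∈ ℝ`,
`exp(tX) = I + (sin(rt)/r)·X + ((1 − cos(rt))/r²)·X²`. -/
theorem rodrigues_formula
    (x y z : ℝ) (h : ¬(x = 0 ∧ y = 0 ∧ z = 0)) (t : ℝ) :
    NormedSpace.exp (t • !![(0:ℝ), -z, y; z, 0, -x; -y, x, 0]) =
      (1 : Matrix (Fin 3) (Fin 3) ℝ)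
        + (Real.sin (Real.sqrt (x ^ 2 + y ^ 2 + z ^ 2) * t) /
            Real.sqrt (x ^ 2 + y ^ 2 + z ^ 2)) • !![(0:ℝ), -z, y; z, 0, -x; -y, x, 0]
        + ((1 - Real.cos (Real.sqrt (x ^ 2 + y ^ 2 + z ^ 2) * t)) /
            Real.sqrt (x ^ 2 + y ^ 2 + z ^ 2) ^ 2) •
              (!![(0:ℝ), -z, y; z, 0, -x; -y, x, 0] * !![(0:ℝ), -z, y; z, 0, -x; -y, x, 0]) := by
  have hs : 0 < x ^ 2 + y ^ 2 + z ^ 2 := by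
    rcases not_and_or.mp h with hx | h'
    · positivity
    rcases not_and_or.mp h' with hy | hz
    · positivity
    · positivity
  set r := Real.sqrt (x ^ 2 + y ^ 2 + z ^ 2) with hrdef
  set X : Matrix (Fin 3) (Fin 3) ℝ := !![(0:ℝ), -z, y; z, 0, -x; -y, x, 0] with hXdef
  have hr2 : r ^ 2 = x ^ 2 + y ^ 2 + z ^ 2 := Real.sq_sqrt hs.le
  have hr : r ≠ 0 := by
    intro h0
    rw [h0] at hr2; simp at hr2; linarith
  have hX3 : X * (X * X) = (-(r ^ 2)) • X := by
    rw [hr2]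
    ext i j
    fin_cases i <;> fin_cases j <;>
      simp [hXdef, Matrix.mul_apply, Fin.sum_univ_succ] <;> ring
  -- powers of X
  have hodd : ∀ k : ℕ, X ^ (2 * k + 1) = ((-(r ^ 2)) ^ k) • X := by
    intro k
    induction k with
    | zero => simp
    | succ k ih =>
      have : 2 * (k + 1) + 1 = (2 * k + 1) + 2 := by ring
      rw [this, pow_add, ih, smul_mul_assoc, pow_two X, hX3, smul_smul, ← pow_succ]
  have heven : ∀ k : ℕ, X ^ (2 * k + 2) = ((-(r ^ 2)) ^ k) • (X * X) := by
    intro k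
    rw [show 2 * k + 2 = (2 * k + 1) + 1 by ring, pow_succ, hodd, smul_mul_assoc]
  -- exponential as tsum
  rw [NormedSpace.exp_eq_tsum ℝ]
  refine HasSum.tsum_eq ?_
  -- odd part
  have hsin := ((Real.hasSum_sin (r * t)).div_const r).smul_const X
  have hcos := Real.hasSum_cos (r * t)
  have hcos1 : HasSum (fun k : ℕ => (-1 : ℝ) ^ (k + 1) * (r * t) ^ (2 * (k + 1)) / ((2 * (k + 1)).factorial : ℝ))
      (Real.cos (r * t) - 1) := by
    refine (hasSum_nat_add_iff
      (f := fun n : ℕ => (-1 : ℝ) ^ n * (r * t) ^ (2 * n) / ((2 * n).factorial : ℝ))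
      (g := Real.cos (r * t) - 1) 1).mpr ?_
    simpa using hcos
  have hcos2 := ((hcos1.neg.div_const (r ^ 2)).smul_const (X * X))
  have hOdd : HasSum (fun k : ℕ => ((2 * k + 1).factorial : ℝ)⁻¹ • (t • X) ^ (2 * k + 1))
      ((Real.sin (r * t) / r) • X) := by
    convert hsin using 2 with k
    rw [smul_pow, hodd, smul_smul, smul_smul]
    congr 1
    rw [mul_pow, neg_pow, ← pow_mul]
    field_simp
    ring
  have hEvenShift : HasSum (fun k : ℕ => ((2 * (k + 1)).factorial : ℝ)⁻¹ • (t • X) ^ (2 * (k + 1)))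
      (((1 - Real.cos (r * t)) / r ^ 2) • (X * X)) := by
    convert hcos2 using 2 with k
    · rw [show 2 * (k + 1) = 2 * k + 2 by ring, smul_pow, heven, smul_smul, smul_smul]
      congr 1
      rw [neg_pow, mul_pow, ← pow_mul]
      field_simp
      ring
    · rw [neg_sub]
  have hEven : HasSum (fun k : ℕ => ((2 * k).factorial : ℝ)⁻¹ • (t • X) ^ (2 * k))
      (((1 - Real.cos (r * t)) / r ^ 2) • (X * X) + 1) := by
    have := (hasSum_nat_add_iff (f := fun k : ℕ => ((2 * k).factorial : ℝ)⁻¹ • (t • X) ^ (2 * k))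
      (g := ((1 - Real.cos (r * t)) / r ^ 2) • (X * X)) 1).mp hEvenShift
    convert this using 1
    · rfl
    simp
  have key := HasSum.even_add_odd
    (f := fun n : ℕ => ((n.factorial : ℝ))⁻¹ • (t • X) ^ n) hEven hOdd
  convert key using 1
  · rfl
  abel
end
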